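/- Let 0 < ε ≤ 1/2, S > 0, and k ≥ 1. Let J be an instance in which every item has size in (ε·S, S], sorted in nondecreasing order of size, and suppose g := n(J)·ε² is a positive integer, where n(J) is the number of items of J. Partition J into consecutive groups of cardinality g (the last group possibly smaller) and let U be the instance obtained from J by rounding each item size up to the maximum size in its group. Then OPT(U_k) ≤ (1+ε)·OPT(J_k). -/

import Mathlib

/-- `OPT(D_k)`: the minimum number `q` of bins of a `k`-times packing of the
instance `d : Fin n → ℝ` with capacity `S`: each bin has total size at most `S`
and each item lies in exactly `k` bins. -/
noncomputable def kOPTF {n : ℕ} (d : Fin n → ℝ) (S : ℝ) (k : ℕ) : ℕ :=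
  sInf {q | ∃ B : Fin q → Finset (Fin n),
    (∀ j, ∑ i ∈ B j, d i ≤ S) ∧
    (∀ i, (Finset.univ.filter fun j => i ∈ B j).card = k)}

lemma kPack_mem {n : ℕ} (d : Fin n → ℝ) (S : ℝ) (k : ℕ) (ι : Type) [Fintype ι]
    (B : ι → Finset (Fin n)) (h1 : ∀ j, ∑ i ∈ B j, d i ≤ S)
    (h2 : ∀ i, Fintype.card {j // i ∈ B j} = k) :
    Fintype.card ι ∈ {q | ∃ B : Fin q → Finset (Fin n),
      (∀ j, ∑ i ∈ B j, d i ≤ S) ∧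
      (∀ i, (Finset.univ.filter fun j => i ∈ B j).card = k)} := by
  classical
  set e := (Fintype.equivFin ι).symm
  refine ⟨fun j => B (e j), fun j => h1 _, fun i => ?_⟩
  rw [← Fintype.card_subtype, ← h2 i]
  exact Fintype.card_congr (Equiv.subtypeEquiv e (fun j => Iff.rfl))

/-- Let `0 < ε ≤ 1/2`, `S > 0`, `k ≥ 1`, and `J = d : Fin nJ → ℝ` an
instance with all sizes in `(ε·S, S]`, sorted in nondecreasing order.  Assume
`g = nJ·ε²` is a positive integer.  Partition `J` into consecutive groups of
cardinality `g` (the last group possibly smaller) and let `U` round each item up to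
the maximum size in its group (for the group of index `i` this maximum sits at
index `min (nJ-1) (i/g·g + g - 1)`).  Then `OPT(U_k) ≤ (1+ε)·OPT(J_k)`. -/
theorem stmt_13 (ε S : ℝ) (hε : 0 < ε ∧ ε ≤ 1/2) (hS : 0 < S)
    (k : ℕ) (hk : 1 ≤ k) (nJ : ℕ) (d : Fin nJ → ℝ)
    (hd : ∀ i, ε * S < d i ∧ d i ≤ S) (hmono : Monotone d)
    (g : ℕ) (hg : 0 < g) (hgval : (g : ℝ) = (nJ : ℝ) * ε ^ 2)
    (U : Fin nJ → ℝ)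
    (hU : U = fun i => d ⟨min (nJ - 1) (i.val / g * g + g - 1),
      (Nat.min_le_left _ _).trans_lt (Nat.sub_lt i.pos Nat.one_pos)⟩) :
    (kOPTF U S k : ℝ) ≤ (1 + ε) * (kOPTF d S k : ℝ) := by
  classical
  obtain ⟨hε0, hε2⟩ := hε
  have hnJ : 0 < nJ := by
    rcases Nat.eq_zero_or_pos nJ with h | h
    · exfalso; rw [h] at hgval; simp at hgval; omega
    · exact h
  have hgnJ : g ≤ nJ := by
    have h1 : ε ^ 2 ≤ 1 := by nlinarith
    have h2 : (0:ℝ) ≤ (nJ : ℝ) := Nat.cast_nonneg _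
    have : (g : ℝ) ≤ (nJ : ℝ) := by
      rw [hgval]; nlinarith
    exact_mod_cast this
  have hdpos : ∀ i, 0 < d i := fun i => lt_trans (by positivity) (hd i).1
  have hUle : ∀ i, U i ≤ S := by intro i; rw [hU]; exact (hd _).2
  -- the trivial packing shows the sInf set for d is nonempty
  have htriv : Fintype.card (Fin k × Fin nJ) ∈ {q | ∃ B : Fin q → Finset (Fin nJ),
      (∀ j, ∑ i ∈ B j, d i ≤ S) ∧
      (∀ i, (Finset.univ.filter fun j => i ∈ B j).card = k)} := by
    refine kPack_mem d S k _ (fun p => {p.2}) (fun p => by simpa using (hd p.2).2) ?_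
    intro i
    have e : {p : Fin k × Fin nJ // i ∈ ({p.2} : Finset (Fin nJ))} ≃ Fin k :=
      { toFun := fun p => p.1.1
        invFun := fun c => ⟨(c, i), by simp⟩
        left_inv := by
          rintro ⟨⟨c, j⟩, h⟩
          simp only [Finset.mem_singleton] at h
          subst h; rfl
        right_inv := fun c => rfl }
    rw [Fintype.card_congr e, Fintype.card_fin]
  set q := kOPTF d S k with hqdef
  obtain ⟨B, hB1, hB2⟩ : q ∈ {q | ∃ B : Fin q → Finset (Fin nJ),
      (∀ j, ∑ i ∈ B j, d i ≤ S) ∧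
      (∀ i, (Finset.univ.filter fun j => i ∈ B j).card = k)} :=
    Nat.sInf_mem ⟨_, htriv⟩
  -- lower bound on q
  have hql : (k : ℝ) * nJ * ε < q := by
    have hdc : ∑ j : Fin q, ∑ i ∈ B j, d i = ∑ i : Fin nJ, (k : ℝ) * d i := by
      have h1 : ∀ j : Fin q, ∑ i ∈ B j, d i
          = ∑ i : Fin nJ, if i ∈ B j then d i else 0 := by
        intro j
        rw [Finset.sum_ite_mem, Finset.univ_inter]
      simp_rw [h1]
      rw [Finset.sum_comm]
      congr 1; funext i
      rw [← Finset.sum_filter, Finset.sum_const, hB2 i, nsmul_eq_mul]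
    have hle : ∑ j : Fin q, ∑ i ∈ B j, d i ≤ (q : ℝ) * S := by
      calc ∑ j : Fin q, ∑ i ∈ B j, d i ≤ ∑ _j : Fin q, S := Finset.sum_le_sum fun j _ => hB1 j
        _ = (q : ℝ) * S := by simp [mul_comm]
    have hgt : (k : ℝ) * ((nJ : ℝ) * (ε * S)) < ∑ i : Fin nJ, (k : ℝ) * d i := by
      rw [← Finset.mul_sum]
      have : (nJ : ℝ) * (ε * S) < ∑ i : Fin nJ, d i := by
        calc (nJ : ℝ) * (ε * S) = ∑ _i : Fin nJ, ε * S := by simp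
          _ < ∑ i : Fin nJ, d i := by
            refine Finset.sum_lt_sum_of_nonempty ?_ fun i _ => (hd i).1
            exact Finset.univ_nonempty_iff.mpr ⟨⟨0, hnJ⟩⟩
      have hk' : (0 : ℝ) < k := by exact_mod_cast hk
      nlinarith
    rw [hdc] at hle
    have := lt_of_lt_of_le hgt hle
    have hq' : (k : ℝ) * ((nJ : ℝ) * ε) * S < (q : ℝ) * S := by nlinarith
    have := lt_of_mul_lt_mul_right hq' hS.le
    nlinarith
  -- construct the packing for U
  have hfl : ∀ i : Fin nJ, i.val - g < nJ := fun i => by have := i.isLt; omega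
  set f : Fin nJ → Fin nJ := fun i => ⟨i.val - g, hfl i⟩ with hf
  have hrl : ∀ r : Fin g, nJ - g + r.val < nJ := fun r => by have := r.isLt; omega
  set B' : (Fin q ⊕ Fin k × Fin g) → Finset (Fin nJ) :=
    Sum.elim (fun j => ((B j).filter fun i => g ≤ i.val).image f)
      (fun p => {⟨nJ - g + p.2.val, hrl p.2⟩}) with hB'
  have memL : ∀ (j : Fin q) (x : Fin nJ), x ∈ B' (Sum.inl j) ↔
      ∃ hx : x.val + g < nJ, (⟨x.val + g, hx⟩ : Fin nJ) ∈ B j := by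
    intro j x
    simp only [hB', Sum.elim_inl, Finset.mem_image, Finset.mem_filter]
    constructor
    · rintro ⟨i, ⟨hiB, hgi⟩, rfl⟩
      have hx : (f i).val + g < nJ := by simp only [hf]; have := i.isLt; omega
      refine ⟨hx, ?_⟩
      have : (⟨(f i).val + g, hx⟩ : Fin nJ) = i := by
        apply Fin.ext; simp only [hf]; omega
      rwa [this]
    · rintro ⟨hx, hmem⟩
      exact ⟨⟨x.val + g, hx⟩, ⟨hmem, by simp⟩, by apply Fin.ext; simp [hf]⟩
  have memR : ∀ (p : Fin k × Fin g) (x : Fin nJ),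
      x ∈ B' (Sum.inr p) ↔ nJ - g + p.2.val = x.val := by
    intro p x
    simp only [hB', Sum.elim_inr, Finset.mem_singleton, Fin.ext_iff]
    exact eq_comm
  have h1' : ∀ j, ∑ x ∈ B' j, U x ≤ S := by
    rintro (j | p)
    · simp only [hB', Sum.elim_inl]
      rw [Finset.sum_image]
      · calc ∑ i ∈ (B j).filter (fun i => g ≤ i.val), U (f i)
            ≤ ∑ i ∈ (B j).filter (fun i => g ≤ i.val), d i := by
              refine Finset.sum_le_sum fun i hi => ?_
              simp only [Finset.mem_filter] at hi
              rw [hU]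
              refine hmono ?_
              show min (nJ - 1) ((f i).val / g * g + g - 1) ≤ i.val
              have h2 := Nat.div_mul_le_self ((f i).val) g
              simp only [hf] at h2 ⊢
              have := i.isLt
              omega
          _ ≤ ∑ i ∈ B j, d i :=
              Finset.sum_le_sum_of_subset_of_nonneg (Finset.filter_subset _ _)
                (fun i _ _ => (hdpos i).le)
          _ ≤ S := hB1 j
      · intro a ha b hb hab
        simp only [Finset.mem_coe, Finset.mem_filter] at ha hb
        simp only [hf, Fin.mk.injEq] at hab
        apply Fin.ext; omega
    · simp only [hB', Sum.elim_inr, Finset.sum_singleton]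
      exact hUle _
  have h2' : ∀ x : Fin nJ, Fintype.card {j // x ∈ B' j} = k := by
    intro x
    rw [Fintype.card_congr (Equiv.subtypeSum), Fintype.card_sum]
    by_cases hx : x.val + g < nJ
    · have hL : Fintype.card {j : Fin q // x ∈ B' (Sum.inl j)} = k := by
        have e : {j : Fin q // x ∈ B' (Sum.inl j)} ≃
            {j : Fin q // (⟨x.val + g, hx⟩ : Fin nJ) ∈ B j} := by
          refine Equiv.subtypeEquiv (Equiv.refl _) fun j => ?_
          rw [memL]
          constructor
          · rintro ⟨h, hm⟩; exact hm
          · intro hm; exact ⟨hx, hm⟩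
        rw [Fintype.card_congr e, Fintype.card_subtype]
        exact hB2 _
      have hR : Fintype.card {p : Fin k × Fin g // x ∈ B' (Sum.inr p)} = 0 := by
        rw [Fintype.card_eq_zero_iff]
        refine ⟨fun ⟨p, hp⟩ => ?_⟩
        rw [memR] at hp
        omega
      rw [hL, hR]; omega
    · have hL : Fintype.card {j : Fin q // x ∈ B' (Sum.inl j)} = 0 := by
        rw [Fintype.card_eq_zero_iff]
        refine ⟨fun ⟨j, hj⟩ => ?_⟩
        rw [memL] at hj
        obtain ⟨h, _⟩ := hj
        exact hx h
      have hR : Fintype.card {p : Fin k × Fin g // x ∈ B' (Sum.inr p)} = k := by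
        have hxval : nJ - g ≤ x.val := by have := x.isLt; omega
        set r0 : Fin g := ⟨x.val - (nJ - g), by have := x.isLt; omega⟩ with hr0
        have e : {p : Fin k × Fin g // x ∈ B' (Sum.inr p)} ≃ Fin k :=
          { toFun := fun p => p.1.1
            invFun := fun c => ⟨(c, r0), by rw [memR]; show nJ - g + (x.val - (nJ - g)) = x.val; omega⟩
            left_inv := by
              rintro ⟨⟨c, r⟩, hp⟩
              rw [memR] at hp
              have hp' : nJ - g + r.val = x.val := hp
              have : r = r0 := by
                apply Fin.ext
                show r.val = x.val - (nJ - g)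
                omega
              subst this; rfl
            right_inv := fun c => rfl }
        rw [Fintype.card_congr e, Fintype.card_fin]
      rw [hL, hR]; omega
  have hUopt : kOPTF U S k ≤ q + k * g := by
    have := kPack_mem U S k (Fin q ⊕ Fin k × Fin g) B' h1' h2'
    have hcard : Fintype.card (Fin q ⊕ Fin k × Fin g) = q + k * g := by simp
    rw [hcard] at this
    exact Nat.sInf_le this
  have hcast : (kOPTF U S k : ℝ) ≤ (q : ℝ) + (k : ℝ) * g := by
    have : ((kOPTF U S k : ℕ) : ℝ) ≤ ((q + k * g : ℕ) : ℝ) := by exact_mod_cast hUopt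
    push_cast at this
    linarith
  have hkg : (k : ℝ) * g ≤ ε * q := by
    rw [hgval]
    nlinarith
  linarith
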